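/- Let n be a finite index type, let K : ℝ → Matrix n n ℝ be differentiable at a point d₀ with K(d₀) symmetric and invertible, and let f ∈ ℝⁿ be a fixed load vector. Then the compliance function d ↦ fᵀ · K(d)⁻¹ · f is differentiable at d₀, and its derivative equals −uᵀ · K′(d₀) · u, where u = K(d₀)⁻¹ · f is the displacement vector and K′(d₀) is the derivative of K at d₀. -/

import Mathlib

open Matrix

attribute [local instance] Matrix.normedAddCommGroup Matrix.normedSpace

open Filter Topology in
/-- Derivative of the matrix inverse along a differentiable matrix family. -/
theorem hasDerivAt_matrix_inv_aux {n : Type*} [Fintype n] [DecidableEq n]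
    (K : ℝ → Matrix n n ℝ) (d₀ : ℝ) (K' : Matrix n n ℝ)
    (hK : HasDerivAt K K' d₀) (hinv : IsUnit (K d₀)) :
    HasDerivAt (fun d => (K d)⁻¹) (-((K d₀)⁻¹ * K' * (K d₀)⁻¹)) d₀ := by
  have hdet : (K d₀).det ≠ 0 := by
    simpa [isUnit_iff_ne_zero] using (Matrix.isUnit_iff_isUnit_det _).mp hinv
  -- continuity of inverse at d₀
  have hcinv : ContinuousAt (fun d => (K d)⁻¹) d₀ := by
    have h1 : ContinuousAt Ring.inverse (K d₀).det := by
      rw [Ring.inverse_eq_inv']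
      exact continuousAt_inv₀ hdet
    exact (continuousAt_matrix_inv (K d₀) h1).comp hK.continuousAt
  -- eventually K d is a unit
  have hev : ∀ᶠ d in 𝓝 d₀, IsUnit (K d) := by
    have hdc : ContinuousAt (fun d => (K d).det) d₀ :=
      (continuous_id.matrix_det.continuousAt.comp hK.continuousAt : )
    have := hdc.eventually_ne hdet
    filter_upwards [this] with d hd
    exact (Matrix.isUnit_iff_isUnit_det _).mpr (isUnit_iff_ne_zero.mpr hd)
  refine hasDerivAt_iff_tendsto_slope.mpr ?_
  have hKs : Tendsto (slope K d₀) (𝓝[≠] d₀) (𝓝 K') :=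
    hasDerivAt_iff_tendsto_slope.mp hK
  have htend : Tendsto (fun d => -((K d)⁻¹ * slope K d₀ d * (K d₀)⁻¹))
      (𝓝[≠] d₀) (𝓝 (-((K d₀)⁻¹ * K' * (K d₀)⁻¹))) := by
    have h1 : Tendsto (fun d => (K d)⁻¹) (𝓝[≠] d₀) (𝓝 ((K d₀)⁻¹)) :=
      hcinv.continuousWithinAt.tendsto
    exact ((h1.mul hKs).mul tendsto_const_nhds).neg
  refine htend.congr' ?_
  filter_upwards [nhdsWithin_le_nhds hev, self_mem_nhdsWithin] with d hd (hne : d ≠ d₀)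
  have key : (K d)⁻¹ - (K d₀)⁻¹ = -((K d)⁻¹ * (K d - K d₀) * (K d₀)⁻¹) := by
    have h1 : (K d)⁻¹ * (K d - K d₀) * (K d₀)⁻¹
        = (K d₀)⁻¹ - (K d)⁻¹ := by
      rw [Matrix.mul_sub, Matrix.sub_mul,
        Matrix.nonsing_inv_mul _ (by simpa [isUnit_iff_ne_zero] using (Matrix.isUnit_iff_isUnit_det _).mp hd),
        Matrix.mul_nonsing_inv_cancel_right _ _ (by simpa [isUnit_iff_ne_zero] using (Matrix.isUnit_iff_isUnit_det _).mp hinv)]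
      simp
    rw [h1, neg_sub]
  simp only [slope, vsub_eq_sub, key]
  rw [Matrix.mul_smul, Matrix.smul_mul, smul_neg]

/-- Sensitivity of structural compliance: for a differentiable stiffness-matrix
family `K` with `K d₀` symmetric and invertible, the compliance
`d ↦ fᵀ (K d)⁻¹ f` is differentiable at `d₀` with derivative `-uᵀ K′(d₀) u`,
where `u = (K d₀)⁻¹ f`. -/
theorem compliance_sensitivity {n : Type*} [Fintype n] [DecidableEq n]
    (K : ℝ → Matrix n n ℝ) (d₀ : ℝ) (f : n → ℝ)
    (hK : DifferentiableAt ℝ K d₀)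
    (hsymm : (K d₀).IsSymm) (hinv : IsUnit (K d₀)) :
    DifferentiableAt ℝ (fun d => f ⬝ᵥ ((K d)⁻¹ *ᵥ f)) d₀ ∧
      deriv (fun d => f ⬝ᵥ ((K d)⁻¹ *ᵥ f)) d₀ =
        -(((K d₀)⁻¹ *ᵥ f) ⬝ᵥ (deriv K d₀ *ᵥ ((K d₀)⁻¹ *ᵥ f))) := by
  set K' := deriv K d₀ with hK'
  have hKd : HasDerivAt K K' d₀ := hK.hasDerivAt
  have hBd := hasDerivAt_matrix_inv_aux K d₀ K' hKd hinv
  -- linear map M ↦ f ⬝ᵥ (M *ᵥ f)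
  let L₀ : Matrix n n ℝ →ₗ[ℝ] ℝ :=
    { toFun := fun M => f ⬝ᵥ (M *ᵥ f)
      map_add' := by intro M N; simp [Matrix.add_mulVec, dotProduct_add]
      map_smul' := by intro c M; simp [Matrix.smul_mulVec, dotProduct_smul] }
  let L : Matrix n n ℝ →L[ℝ] ℝ := L₀.toContinuousLinearMap
  have hc : HasDerivAt (fun d => f ⬝ᵥ ((K d)⁻¹ *ᵥ f))
      (f ⬝ᵥ ((-((K d₀)⁻¹ * K' * (K d₀)⁻¹)) *ᵥ f)) d₀ := by
    have := L.hasFDerivAt.comp_hasDerivAt d₀ hBd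
    exact this
  have halg : f ⬝ᵥ ((-((K d₀)⁻¹ * K' * (K d₀)⁻¹)) *ᵥ f)
      = -(((K d₀)⁻¹ *ᵥ f) ⬝ᵥ (K' *ᵥ ((K d₀)⁻¹ *ᵥ f))) := by
    have hsi : ((K d₀)⁻¹)ᵀ = (K d₀)⁻¹ := by
      rw [Matrix.transpose_nonsing_inv, hsymm.eq]
    rw [Matrix.neg_mulVec, dotProduct_neg, neg_inj, ← Matrix.mulVec_mulVec,
      ← Matrix.mulVec_mulVec, Matrix.dotProduct_mulVec f ((K d₀)⁻¹),
      ← Matrix.mulVec_transpose, hsi]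
  exact ⟨hc.differentiableAt, by rw [hc.deriv, halg]⟩
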